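/- Let π be a strictly positive probability density on ℝ^k such that log π is differentiable with L-Lipschitz gradient ∇log π, let H : ℝ^k → (k×k matrices) be a measurable function that agrees Lebesgue-almost everywhere with the derivative of ∇log π (which exists almost everywhere by the Lipschitz property), let Λ be a symmetric positive definite k×k matrix, l > 0, and K_Λ = √(2‖Λ‖_F² + Tr(Λ)²). For each integer d ≥ 2 define θ(d) = l²(d−1)·K_Λ · E_{X∼π}[ √( E_{Z∼N(0, l²Λ/(d−1))}[ | log π(X+Z) − log π(X) − ⟨∇log π(X), Z⟩ − (1/2)⟨Z, H(X)·Z⟩ |² ] ) ]. Then lim_{d→∞} θ(d) = 0. -/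

import Mathlib

open MeasureTheory ProbabilityTheory Filter
open scoped NNReal ENNReal RealInnerProductSpace

section helpers
open Real Set

lemma gaussianPDFReal_zero_eq (v : ℝ≥0) (x : ℝ) :
    gaussianPDFReal 0 v x
      = (Real.sqrt (2 * Real.pi * v))⁻¹ * Real.exp (-((2:ℝ)*v)⁻¹ * x ^ 2) := by
  rw [gaussianPDFReal]
  congr 1
  rw [sub_zero]
  ring_nf

lemma myIntegral_pow_gaussianReal (n : ℕ) (hn : 0 < n) (v : ℝ≥0) :
    ∫ x : ℝ, x ^ (2 * n) ∂(gaussianReal 0 v)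
      = (2 ^ n * Real.Gamma ((n : ℝ) + 1/2) / Real.sqrt Real.pi) * (v : ℝ) ^ n := by
  by_cases hv : v = 0
  · subst hv
    rw [gaussianReal_zero_var, integral_dirac]
    simp [hn.ne', (by omega : 2 * n ≠ 0)]
  · have hvpos : (0:ℝ) < (v:ℝ) := by
      have := hv; positivity
    have hb : 0 < ((2:ℝ)*(v:ℝ))⁻¹ := by positivity
    set b : ℝ := ((2:ℝ)*(v:ℝ))⁻¹ with hbdef
    have hmeas : Measurable fun x => (gaussianPDFReal 0 v x).toNNReal :=
      (measurable_gaussianPDFReal 0 v).real_toNNReal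
    have h0 : (fun x : ℝ => ENNReal.ofReal (gaussianPDFReal 0 v x))
        = fun x => ((gaussianPDFReal 0 v x).toNNReal : ℝ≥0∞) := rfl
    rw [gaussianReal_of_var_ne_zero 0 hv, gaussianPDF_def, h0,
      integral_withDensity_eq_integral_smul hmeas]
    have h1 : ∀ x : ℝ, (gaussianPDFReal 0 v x).toNNReal • x ^ (2*n)
        = (Real.sqrt (2 * Real.pi * v))⁻¹ * (x ^ (2*n) * Real.exp (-b * x ^ 2)) := by
      intro x
      rw [NNReal.smul_def, smul_eq_mul,
        Real.coe_toNNReal _ (gaussianPDFReal_nonneg 0 v x), gaussianPDFReal_zero_eq]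
      ring
    simp only [h1]
    rw [integral_const_mul]
    have h2 : (fun x : ℝ => x ^ (2*n) * Real.exp (-b * x ^ 2))
        = fun x : ℝ => |x| ^ (2*n) * Real.exp (-b * |x| ^ 2) := by
      funext x
      rw [pow_mul, pow_mul, sq_abs]
    rw [h2, integral_comp_abs (f := fun x : ℝ => x ^ (2*n) * Real.exp (-b * x ^ 2))]
    have h3 : ∫ x in Ioi (0:ℝ), x ^ (2*n) * Real.exp (-b * x ^ 2)
        = b ^ (-(((2*n : ℕ):ℝ) + 1) / 2) * (1 / 2) * Real.Gamma ((((2*n : ℕ):ℝ) + 1) / 2) := by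
      rw [← integral_rpow_mul_exp_neg_mul_rpow two_pos
        (lt_of_lt_of_le neg_one_lt_zero (Nat.cast_nonneg _)) hb]
      refine setIntegral_congr_fun measurableSet_Ioi fun x _ => ?_
      rw [Real.rpow_natCast, Real.rpow_two]
    rw [h3]
    -- now pure arithmetic
    have hGam : (((2*n : ℕ):ℝ) + 1) / 2 = (n : ℝ) + 1/2 := by push_cast; ring
    rw [hGam]
    have hbpow : b ^ (-(((2*n : ℕ):ℝ) + 1) / 2)
        = ((2:ℝ)*v) ^ ((n:ℝ) + 1/2) := by
      rw [hbdef, ← Real.rpow_neg_one (2*(v:ℝ)),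
        ← Real.rpow_mul (by positivity : (0:ℝ) ≤ 2*(v:ℝ))]
      congr 1
      push_cast
      ring
    rw [hbpow, Real.rpow_add (by positivity), Real.rpow_natCast, ← Real.sqrt_eq_rpow,
      show 2 * Real.pi * (v:ℝ) = Real.pi * (2 * (v:ℝ)) by ring,
      Real.sqrt_mul Real.pi_nonneg, mul_pow]
    have h4 : Real.sqrt (2 * (v:ℝ)) > 0 := Real.sqrt_pos.2 (by positivity)
    have h5 : Real.sqrt Real.pi > 0 := Real.sqrt_pos.2 Real.pi_pos
    field_simp

lemma myIntegrable_pow_gaussianReal (n : ℕ) (v : ℝ≥0) :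
    Integrable (fun x : ℝ => x ^ n) (gaussianReal 0 v) := by
  by_cases hv : v = 0
  · subst hv
    rw [gaussianReal_zero_var]
    refine (integrable_const ((0:ℝ) ^ n)).congr ?_
    rw [Filter.EventuallyEq, ae_dirac_eq]
    exact Filter.eventually_pure.2 rfl
  · rw [gaussianReal_of_var_ne_zero 0 hv, gaussianPDF_def]
    have hmeas : Measurable fun x => (gaussianPDFReal 0 v x).toNNReal :=
      (measurable_gaussianPDFReal 0 v).real_toNNReal
    have h0 : (fun x : ℝ => ENNReal.ofReal (gaussianPDFReal 0 v x))
        = fun x => ((gaussianPDFReal 0 v x).toNNReal : ℝ≥0∞) := rfl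
    rw [h0, integrable_withDensity_iff_integrable_smul hmeas]
    have hvpos : (0:ℝ) < (v:ℝ) := by
      have := hv; positivity
    have hb : 0 < ((2:ℝ)*(v:ℝ))⁻¹ := by positivity
    have key : Integrable (fun x : ℝ => x ^ n * Real.exp (-((2:ℝ)*(v:ℝ))⁻¹ * x ^ 2)) := by
      have h := integrable_rpow_mul_exp_neg_mul_sq hb (s := (n:ℝ))
        (lt_of_lt_of_le neg_one_lt_zero (Nat.cast_nonneg n))
      refine h.congr (Filter.Eventually.of_forall fun x => ?_)
      simp only [Real.rpow_natCast]
    refine (key.const_mul ((Real.sqrt (2 * Real.pi * v))⁻¹)).congr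
      (Filter.Eventually.of_forall fun x => ?_)
    simp only
    rw [NNReal.smul_def, smul_eq_mul,
      Real.coe_toNNReal _ (gaussianPDFReal_nonneg 0 v x), gaussianPDFReal_zero_eq]
    ring

open scoped RealInnerProductSpace in
lemma taylor_line_bound {k : ℕ} {p : EuclideanSpace ℝ (Fin k) → ℝ}
    {g : EuclideanSpace ℝ (Fin k) → EuclideanSpace ℝ (Fin k)}
    (hgrad : ∀ y, HasGradientAt (fun z => Real.log (p z)) (g y) y)
    (x z : EuclideanSpace ℝ (Fin k)) (q C : ℝ)
    (hC : ∀ t ∈ Set.Icc (0:ℝ) 1, |⟪g (x + t • z), z⟫ - ⟪g x, z⟫ - t * q| ≤ C) :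
    |Real.log (p (x + z)) - Real.log (p x) - ⟪g x, z⟫ - q/2| ≤ C := by
  have hline : ∀ t : ℝ, HasDerivAt (fun s : ℝ => x + s • z) z t := fun t => by
    simpa using ((hasDerivAt_id t).smul_const z).const_add x
  have hφ : ∀ t : ℝ, HasDerivAt (fun s : ℝ => Real.log (p (x + s • z)))
      ⟪g (x + t • z), z⟫ t := fun t => by
    have h1 := (hgrad (x + t • z)).hasFDerivAt.comp_hasDerivAt t (hline t)
    have h2 : HasDerivAt ((fun z => Real.log (p z)) ∘ fun s : ℝ => x + s • z) ⟪g (x + t • z), z⟫ t := by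
      simpa [InnerProductSpace.toDual_apply_apply] using h1
    exact h2
  have hψ : ∀ t : ℝ, HasDerivAt
      (fun s : ℝ => Real.log (p (x + s • z)) - s * ⟪g x, z⟫ - s^2 * (q/2))
      (⟪g (x + t • z), z⟫ - ⟪g x, z⟫ - t * q) t := by
    intro t
    have h := ((hφ t).sub (hasDerivAt_mul_const ⟪g x, z⟫)).sub
      ((hasDerivAt_pow 2 t).mul_const (q/2))
    convert h using 1
    · rfl
    · rfl
    · rfl
    · push_cast
      ring
  have key := norm_image_sub_le_of_norm_deriv_le_segment'
    (f := fun s : ℝ => Real.log (p (x + s • z)) - s * ⟪g x, z⟫ - s^2 * (q/2))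
    (f' := fun t => ⟪g (x + t • z), z⟫ - ⟪g x, z⟫ - t * q) (a := 0) (b := 1)
    (fun t ht => (hψ t).hasDerivWithinAt)
    (fun t ht => hC t (Set.mem_Icc_of_Ico ht)) 1 (Set.right_mem_Icc.2 zero_le_one)
  have h10 : Real.log (p (x + z)) - Real.log (p x) - ⟪g x, z⟫ - q/2
      = ((fun s : ℝ => Real.log (p (x + s • z)) - s * ⟪g x, z⟫ - s^2 * (q/2)) 1
        - (fun s : ℝ => Real.log (p (x + s • z)) - s * ⟪g x, z⟫ - s^2 * (q/2)) 0) := by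
    simp only [one_smul, zero_smul, add_zero]
    ring
  rw [h10]
  calc _ ≤ C * (1 - 0) := key
    _ = C := by ring

open scoped RealInnerProductSpace in
lemma quadform_eq {k : ℕ} (M : Matrix (Fin k) (Fin k) ℝ) (z : EuclideanSpace ℝ (Fin k)) :
    ∑ i, ∑ j, z i * M i j * z j
      = ⟪(LinearMap.toContinuousLinearMap (Matrix.toEuclideanLin M)) z, z⟫ := by
  rw [LinearMap.coe_toContinuousLinearMap']
  rw [PiLp.inner_apply]
  simp only [RCLike.inner_apply, conj_trivial]
  have happ : ∀ i, (Matrix.toEuclideanLin M z) i = ∑ j, M i j * z j := by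
    intro i
    rw [Matrix.toEuclideanLin_apply]
    rfl
  rw [Finset.sum_congr rfl (fun (i : Fin k) (_ : i ∈ Finset.univ) => by
    rw [happ i, Finset.mul_sum] :
    ∀ i ∈ Finset.univ, z i * (Matrix.toEuclideanLin M) z i = ∑ j, z i * (M i j * z j))]
  exact Finset.sum_congr rfl fun i _ => Finset.sum_congr rfl fun j _ => by ring

lemma my_sqrt_add_le (a b : ℝ) (ha : 0 ≤ a) (hb : 0 ≤ b) :
    Real.sqrt (a + b) ≤ Real.sqrt a + Real.sqrt b := by
  rw [← Real.sqrt_sq (by positivity : (0:ℝ) ≤ Real.sqrt a + Real.sqrt b)]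
  apply Real.sqrt_le_sqrt
  nlinarith [Real.sq_sqrt ha, Real.sq_sqrt hb, Real.sqrt_nonneg a, Real.sqrt_nonneg b]

lemma pow_sum_le {k : ℕ} (n : ℕ) (hn : 0 < n) (f : Fin k → ℝ) (hf : ∀ i, 0 ≤ f i) :
    (∑ i, f i) ^ n ≤ (k:ℝ) ^ (n - 1) * ∑ i, f i ^ n := by
  rcases Nat.eq_zero_or_pos k with hk | hk
  · subst hk
    simp [Finset.sum_of_isEmpty, zero_pow hn.ne']
  · have hcard : ((Finset.univ : Finset (Fin k)).card : ℝ) = (k:ℝ) := by simp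
    have h := pow_sum_div_card_le_sum_pow (f := f) (s := Finset.univ)
      (fun i _ => hf i) (n - 1)
    rw [Nat.sub_add_cancel hn] at h
    rw [hcard] at h
    have hkpos : (0:ℝ) < (k:ℝ) ^ (n-1) := by positivity
    calc (∑ i, f i) ^ n = ((∑ i, f i) ^ n / (k:ℝ)^(n-1)) * (k:ℝ)^(n-1) := by
          field_simp
      _ ≤ (∑ i, f i ^ n) * (k:ℝ)^(n-1) := by
          exact mul_le_mul_of_nonneg_right h hkpos.le
      _ = (k:ℝ) ^ (n - 1) * ∑ i, f i ^ n := by ring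

end helpers

set_option maxHeartbeats 1000000 in
/-- Lemma (θ(d) → 0): for a strictly positive probability density `π` on `ℝ^k` whose
log-density has an `L`-Lipschitz gradient `g = ∇log π`, with `H` a measurable matrix-valued
function agreeing Lebesgue-a.e. with the derivative of `g`, `Λ` symmetric positive definite,
`l > 0`, `K_Λ = √(2‖Λ‖_F² + Tr(Λ)²)`, and `Z ~ N(0, l²Λ/(d-1))`,
`θ(d) = l²(d-1) K_Λ E_{X∼π}[ √( E_Z |log π(X+Z) - log π(X) - ⟨g(X), Z⟩ - ⟨Z, H(X)Z⟩/2|² ) ]`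
tends to `0` as `d → ∞`. -/
theorem theta_tendsto_zero
    {k : ℕ} (π : EuclideanSpace ℝ (Fin k) → ℝ)
    (hπpos : ∀ y, 0 < π y) (hπmeas : Measurable π) (hπint : (∫ y, π y) = 1)
    (L : ℝ) (g : EuclideanSpace ℝ (Fin k) → EuclideanSpace ℝ (Fin k))
    (hgrad : ∀ y, HasGradientAt (fun z => Real.log (π z)) (g y) y)
    (hLip : ∀ y z, ‖g y - g z‖ ≤ L * ‖y - z‖)
    (H : EuclideanSpace ℝ (Fin k) → Matrix (Fin k) (Fin k) ℝ)
    (hHmeas : ∀ i j, Measurable fun y => H y i j)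
    (hHae : ∀ᵐ y : EuclideanSpace ℝ (Fin k),
      HasFDerivAt g (LinearMap.toContinuousLinearMap (Matrix.toEuclideanLin (H y))) y)
    (Λ : Matrix (Fin k) (Fin k) ℝ) (hsym : Λ.IsSymm) (hpd : Λ.PosDef) (l : ℝ) (hl : 0 < l)
    (μ : ℕ → Measure (EuclideanSpace ℝ (Fin k))) (hprob : ∀ d, IsProbabilityMeasure (μ d))
    (hμ : ∀ d : ℕ, 2 ≤ d → ∀ u : EuclideanSpace ℝ (Fin k),
      Measure.map (fun z => ⟪u, z⟫) (μ d)
        = gaussianReal 0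
            (Real.toNNReal (l ^ 2 * (∑ i, ∑ j, u i * Λ i j * u j) / ((d : ℝ) - 1)))) :
    Tendsto (fun d : ℕ =>
        l ^ 2 * ((d : ℝ) - 1) * Real.sqrt (2 * ∑ i, ∑ j, Λ i j ^ 2 + (∑ i, Λ i i) ^ 2) *
          ∫ x, Real.sqrt (∫ z, |Real.log (π (x + z)) - Real.log (π x) - ⟪g x, z⟫
                - (1 / 2) * ∑ i, ∑ j, z i * H x i j * z j| ^ 2 ∂(μ d))
            ∂(volume.withDensity fun y => ENNReal.ofReal (π y)))
      atTop (nhds 0) := by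
  classical
  set L₀ : ℝ := max L 0 with hL₀def
  have hL0 : (0:ℝ) ≤ L₀ := le_max_right _ _
  have hLip' : ∀ y w, ‖g y - g w‖ ≤ L₀ * ‖y - w‖ := fun y w =>
    (hLip y w).trans (mul_le_mul_of_nonneg_right (le_max_left _ _) (norm_nonneg _))
  have hgLip : LipschitzWith (Real.toNNReal L₀) g := by
    refine LipschitzWith.of_dist_le_mul fun y w => ?_
    rw [dist_eq_norm, dist_eq_norm, Real.coe_toNNReal _ hL0]
    exact hLip' y w
  have hgcont : Continuous g := hgLip.continuous
  have hlogcont : Continuous fun y => Real.log (π y) :=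
    continuous_iff_continuousAt.2 fun y => (hgrad y).hasFDerivAt.continuousAt
  have hπint' : Integrable π (volume) := by
    by_contra hcon
    rw [integral_undef hcon] at hπint
    norm_num at hπint
  set ν : Measure (EuclideanSpace ℝ (Fin k)) :=
    volume.withDensity fun y => ENNReal.ofReal (π y) with hνdef
  haveI hνprob : IsProbabilityMeasure ν := by
    constructor
    rw [hνdef, withDensity_apply _ MeasurableSet.univ, setLIntegral_univ,
      ← ofReal_integral_eq_lintegral_ofReal hπint'
        (Filter.Eventually.of_forall fun y => (hπpos y).le),
      hπint, ENNReal.ofReal_one]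
  have hνvol : ν ≪ volume := withDensity_absolutelyContinuous _ _
  set Hop : EuclideanSpace ℝ (Fin k) →
      (EuclideanSpace ℝ (Fin k) →L[ℝ] EuclideanSpace ℝ (Fin k)) :=
    fun x => LinearMap.toContinuousLinearMap (Matrix.toEuclideanLin (H x)) with hHopdef
  set R : EuclideanSpace ℝ (Fin k) → EuclideanSpace ℝ (Fin k) → ℝ := fun x z =>
    Real.log (π (x + z)) - Real.log (π x) - ⟪g x, z⟫
      - (1/2) * ∑ i, ∑ j, z i * H x i j * z j with hRdef
  set c : ℕ → ℝ := fun d => l^2 / ((d:ℝ) - 1) with hcdef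
  have hd1 : ∀ d : ℕ, 2 ≤ d → (1:ℝ) ≤ (d:ℝ) - 1 := by
    intro d hd
    have : (2:ℝ) ≤ (d:ℝ) := by exact_mod_cast hd
    linarith
  have hcpos : ∀ d : ℕ, 2 ≤ d → 0 < c d := by
    intro d hd
    rw [hcdef]
    exact div_pos (by positivity) (by linarith [hd1 d hd])
  have hdiagpos : ∀ i, 0 < Λ i i := by
    intro i
    have hx0 : (Pi.single i (1:ℝ) : Fin k → ℝ) ≠ 0 := by
      intro hcon
      have := congrFun hcon i
      simp at this
    have h := hpd.re_dotProduct_pos hx0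
    simpa [dotProduct, Matrix.mulVec, Pi.single_apply] using h
  set KK : ℕ → ℝ := fun n => 2^n * Real.Gamma ((n:ℝ) + 1/2) / Real.sqrt Real.pi with hKKdef
  have hKKpos : ∀ n : ℕ, 0 < KK n := fun n => by
    rw [hKKdef]
    have h1 : 0 < Real.Gamma ((n:ℝ)+1/2) := Real.Gamma_pos_of_pos (by positivity)
    have h2 : 0 < Real.sqrt Real.pi := Real.sqrt_pos.2 Real.pi_pos
    positivity
  set A : ℕ → ℝ := fun n => (k:ℝ)^(n-1) * KK n * ∑ i, (Λ i i)^n with hAdef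
  have hAnn : ∀ n : ℕ, 0 ≤ A n := fun n => by
    rw [hAdef]
    have h1 := (hKKpos n).le
    have h2 : 0 ≤ ∑ i, (Λ i i)^n :=
      Finset.sum_nonneg fun i _ => pow_nonneg (hdiagpos i).le n
    positivity
  have hco : ∀ d : ℕ, 2 ≤ d → ∀ n : ℕ, 0 < n → ∀ i,
      Integrable (fun z : EuclideanSpace ℝ (Fin k) => (z i)^(2*n)) (μ d) ∧
      ∫ z, (z i)^(2*n) ∂(μ d) = KK n * (c d * Λ i i)^n := by
    intro d hd n hn i
    haveI := hprob d
    have hproj : Measurable fun z : EuclideanSpace ℝ (Fin k) => z i :=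
      (EuclideanSpace.proj (𝕜 := ℝ) i).continuous.measurable
    have hmap := hμ d hd (EuclideanSpace.single i 1)
    have h1 : (fun z : EuclideanSpace ℝ (Fin k) => (⟪EuclideanSpace.single i (1:ℝ), z⟫ : ℝ))
        = fun z => z i := by
      funext z
      rw [EuclideanSpace.inner_single_left]
      simp
    have h2 : l ^ 2 * (∑ i', ∑ j, EuclideanSpace.single i (1:ℝ) i' * Λ i' j
          * EuclideanSpace.single i (1:ℝ) j) / ((d:ℝ) - 1) = c d * Λ i i := by
      have hsum : (∑ i', ∑ j, EuclideanSpace.single i (1:ℝ) i' * Λ i' j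
          * EuclideanSpace.single i (1:ℝ) j) = Λ i i := by
        simp [EuclideanSpace.single_apply, mul_ite, ite_mul, Finset.sum_ite_eq',
          Finset.mem_univ]
      rw [hsum, hcdef]
      ring
    rw [h1, h2] at hmap
    have hvnn : 0 ≤ c d * Λ i i := mul_nonneg (hcpos d hd).le (hdiagpos i).le
    have hvc : ((Real.toNNReal (c d * Λ i i) : ℝ≥0) : ℝ) = c d * Λ i i :=
      Real.coe_toNNReal _ hvnn
    have hAES : AEStronglyMeasurable (fun x : ℝ => x ^ (2*n))
        (Measure.map (fun z : EuclideanSpace ℝ (Fin k) => z i) (μ d)) :=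
      (measurable_id.pow_const (2*n)).aestronglyMeasurable
    constructor
    · have hint := myIntegrable_pow_gaussianReal (2*n) (Real.toNNReal (c d * Λ i i))
      rw [← hmap] at hint
      exact (integrable_map_measure hAES hproj.aemeasurable).1 hint
    · have hmi := integral_map (f := fun x : ℝ => x ^ (2*n)) hproj.aemeasurable hAES
      rw [hmap] at hmi
      rw [← hmi, myIntegral_pow_gaussianReal n hn, hvc, hKKdef]
  have hnm : ∀ d : ℕ, 2 ≤ d → ∀ n : ℕ, 0 < n →
      Integrable (fun z : EuclideanSpace ℝ (Fin k) => ‖z‖^(2*n)) (μ d) ∧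
      ∫ z, ‖z‖^(2*n) ∂(μ d) ≤ A n * (c d)^n := by
    intro d hd n hn
    haveI := hprob d
    have hptw : ∀ z : EuclideanSpace ℝ (Fin k),
        ‖z‖^(2*n) ≤ (k:ℝ)^(n-1) * ∑ i, (z i)^(2*n) := by
      intro z
      have hnormpow : ‖z‖^(2*n) = (∑ i, (z i)^2)^n := by
        rw [pow_mul]
        congr 1
        rw [EuclideanSpace.norm_eq,
          Real.sq_sqrt (Finset.sum_nonneg fun i _ => sq_nonneg _)]
        simp [Real.norm_eq_abs, sq_abs]
      rw [hnormpow]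
      calc (∑ i, (z i)^2)^n ≤ (k:ℝ)^(n-1) * ∑ i, ((z i)^2)^n :=
            pow_sum_le n hn (fun i => (z i)^2) (fun i => sq_nonneg _)
        _ = (k:ℝ)^(n-1) * ∑ i, (z i)^(2*n) := by
            congr 1
            exact Finset.sum_congr rfl fun i _ => (pow_mul (z i) 2 n).symm
    have hIsum : Integrable
        (fun z : EuclideanSpace ℝ (Fin k) => (k:ℝ)^(n-1) * ∑ i, (z i)^(2*n)) (μ d) :=
      (integrable_finset_sum _ fun i _ => (hco d hd n hn i).1).const_mul _
    have hmeasn : AEStronglyMeasurable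
        (fun z : EuclideanSpace ℝ (Fin k) => ‖z‖^(2*n)) (μ d) :=
      (continuous_norm.pow _).aestronglyMeasurable
    have hInt : Integrable (fun z : EuclideanSpace ℝ (Fin k) => ‖z‖^(2*n)) (μ d) := by
      refine hIsum.mono' hmeasn (Filter.Eventually.of_forall fun z => ?_)
      rw [Real.norm_eq_abs, abs_of_nonneg (by positivity)]
      exact hptw z
    refine ⟨hInt, ?_⟩
    calc ∫ z, ‖z‖^(2*n) ∂(μ d)
        ≤ ∫ z, (k:ℝ)^(n-1) * ∑ i, (z i)^(2*n) ∂(μ d) := integral_mono hInt hIsum hptw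
      _ = (k:ℝ)^(n-1) * ∑ i, ∫ z, (z i)^(2*n) ∂(μ d) := by
          rw [integral_const_mul, integral_finset_sum _ fun i _ => (hco d hd n hn i).1]
      _ = (k:ℝ)^(n-1) * ∑ i, KK n * (c d * Λ i i)^n := by
          congr 1
          exact Finset.sum_congr rfl fun i _ => (hco d hd n hn i).2
      _ = A n * (c d)^n := by
          have hs : ∑ i, KK n * (c d * Λ i i)^n = KK n * (c d)^n * ∑ i, (Λ i i)^n := by
            rw [Finset.mul_sum]
            exact Finset.sum_congr rfl fun i _ => by rw [mul_pow]; ring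
          rw [hs, hAdef]
          ring
  have est1 : ∀ x, HasFDerivAt g (Hop x) x → ∀ z, |R x z| ≤ 2 * L₀ * ‖z‖^2 := by
    intro x hx z
    set q : ℝ := ∑ i, ∑ j, z i * H x i j * z j with hqdef
    have hq : q = ⟪Hop x z, z⟫ := by rw [hqdef, hHopdef]; exact quadform_eq (H x) z
    have hopn : ‖Hop x‖ ≤ L₀ := by
      have := hx.le_of_lipschitz hgLip
      rwa [Real.coe_toNNReal _ hL0] at this
    have hqb : |q| ≤ L₀ * ‖z‖^2 := by
      rw [hq]
      calc |(⟪Hop x z, z⟫ : ℝ)| ≤ ‖Hop x z‖ * ‖z‖ := abs_real_inner_le_norm _ _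
        _ ≤ (‖Hop x‖ * ‖z‖) * ‖z‖ :=
            mul_le_mul_of_nonneg_right ((Hop x).le_opNorm z) (norm_nonneg _)
        _ ≤ (L₀ * ‖z‖) * ‖z‖ := mul_le_mul_of_nonneg_right
            (mul_le_mul_of_nonneg_right hopn (norm_nonneg z)) (norm_nonneg z)
        _ = L₀ * ‖z‖^2 := by ring
    have hder : ∀ t ∈ Set.Icc (0:ℝ) 1,
        |(⟪g (x + t • z), z⟫ : ℝ) - ⟪g x, z⟫ - t * q| ≤ L₀*‖z‖^2 + L₀*‖z‖^2 := by
      intro t ht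
      have ht1 : |t| ≤ 1 := abs_le.2 ⟨by linarith [ht.1], ht.2⟩
      have h1 : |(⟪g (x + t • z), z⟫ : ℝ) - ⟪g x, z⟫| ≤ L₀ * ‖z‖^2 := by
        rw [← inner_sub_left]
        calc |(⟪g (x + t • z) - g x, z⟫ : ℝ)| ≤ ‖g (x + t • z) - g x‖ * ‖z‖ :=
              abs_real_inner_le_norm _ _
          _ ≤ (L₀ * ‖t • z‖) * ‖z‖ := by
              refine mul_le_mul_of_nonneg_right ?_ (norm_nonneg _)
              have h := hLip' (x + t • z) x
              rwa [add_sub_cancel_left] at h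
          _ ≤ L₀ * ‖z‖^2 := by
              rw [norm_smul, Real.norm_eq_abs]
              have h7 : |t| * ‖z‖ ≤ ‖z‖ := by nlinarith [norm_nonneg z, abs_nonneg t]
              calc L₀ * (|t| * ‖z‖) * ‖z‖ ≤ L₀ * ‖z‖ * ‖z‖ := by
                    refine mul_le_mul_of_nonneg_right
                      (mul_le_mul_of_nonneg_left h7 hL0) (norm_nonneg _)
                _ = L₀ * ‖z‖^2 := by ring
      have h2 : |t * q| ≤ L₀ * ‖z‖^2 := by
        rw [abs_mul]
        calc |t| * |q| ≤ 1 * |q| := mul_le_mul_of_nonneg_right ht1 (abs_nonneg q)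
          _ = |q| := one_mul _
          _ ≤ L₀ * ‖z‖^2 := hqb
      calc |(⟪g (x + t • z), z⟫ : ℝ) - ⟪g x, z⟫ - t * q|
          ≤ |(⟪g (x + t • z), z⟫ : ℝ) - ⟪g x, z⟫| + |t * q| := abs_sub _ _
        _ ≤ L₀*‖z‖^2 + L₀*‖z‖^2 := add_le_add h1 h2
    have hT := taylor_line_bound hgrad x z q (L₀*‖z‖^2 + L₀*‖z‖^2) hder
    have hR' : R x z = Real.log (π (x+z)) - Real.log (π x) - ⟪g x, z⟫ - q/2 := by
      simp only [hRdef]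
      rw [hqdef]
      ring
    rw [hR']
    calc |Real.log (π (x+z)) - Real.log (π x) - (⟪g x, z⟫:ℝ) - q/2|
        ≤ L₀*‖z‖^2 + L₀*‖z‖^2 := hT
      _ = 2 * L₀ * ‖z‖^2 := by ring
  have est2 : ∀ x, HasFDerivAt g (Hop x) x → ∀ ε : ℝ, 0 < ε → ∃ δ : ℝ, 0 < δ ∧
      ∀ z, ‖z‖ < δ → |R x z| ≤ ε * ‖z‖^2 := by
    intro x hx ε hε
    have hlo := hasFDerivAt_iff_isLittleO_nhds_zero.1 hx
    have hev := hlo.def hε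
    rw [Metric.eventually_nhds_iff] at hev
    obtain ⟨δ, hδ, hball⟩ := hev
    refine ⟨δ, hδ, fun z hz => ?_⟩
    set q : ℝ := ∑ i, ∑ j, z i * H x i j * z j with hqdef
    have hq : q = ⟪Hop x z, z⟫ := by rw [hqdef, hHopdef]; exact quadform_eq (H x) z
    have hder : ∀ t ∈ Set.Icc (0:ℝ) 1,
        |(⟪g (x + t • z), z⟫ : ℝ) - ⟪g x, z⟫ - t * q| ≤ ε * ‖z‖^2 := by
      intro t ht
      have ht1 : |t| ≤ 1 := abs_le.2 ⟨by linarith [ht.1], ht.2⟩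
      have hw : dist (t • z) (0 : EuclideanSpace ℝ (Fin k)) < δ := by
        rw [dist_zero_right, norm_smul, Real.norm_eq_abs]
        calc |t| * ‖z‖ ≤ 1 * ‖z‖ := mul_le_mul_of_nonneg_right ht1 (norm_nonneg _)
          _ = ‖z‖ := one_mul _
          _ < δ := hz
      have hkey := hball hw
      have hexp : (⟪g (x + t • z), z⟫ : ℝ) - ⟪g x, z⟫ - t * q
          = ⟪g (x + t • z) - g x - Hop x (t • z), z⟫ := by
        rw [inner_sub_left, inner_sub_left, hq, (Hop x).map_smul, real_inner_smul_left]
      rw [hexp]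
      calc |(⟪g (x + t • z) - g x - Hop x (t • z), z⟫ : ℝ)|
          ≤ ‖g (x + t • z) - g x - Hop x (t • z)‖ * ‖z‖ := abs_real_inner_le_norm _ _
        _ ≤ (ε * ‖t • z‖) * ‖z‖ := mul_le_mul_of_nonneg_right hkey (norm_nonneg _)
        _ ≤ ε * ‖z‖^2 := by
            rw [norm_smul, Real.norm_eq_abs]
            have h7 : |t| * ‖z‖ ≤ ‖z‖ := by
              nlinarith [norm_nonneg z, abs_nonneg t]
            calc ε * (|t| * ‖z‖) * ‖z‖ ≤ ε * ‖z‖ * ‖z‖ := by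
                  refine mul_le_mul_of_nonneg_right
                    (mul_le_mul_of_nonneg_left h7 hε.le) (norm_nonneg _)
              _ = ε * ‖z‖^2 := by ring
    have hT := taylor_line_bound hgrad x z q (ε * ‖z‖^2) hder
    have hR' : R x z = Real.log (π (x+z)) - Real.log (π x) - ⟪g x, z⟫ - q/2 := by
      simp only [hRdef]
      rw [hqdef]
      ring
    rw [hR']
    exact hT
  have hRcont : ∀ x, Continuous fun z => R x z := by
    intro x
    simp only [hRdef]
    refine Continuous.sub (Continuous.sub (Continuous.sub ?_ continuous_const) ?_) ?_
    · exact hlogcont.comp (continuous_const.add continuous_id)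
    · exact Continuous.inner continuous_const continuous_id
    · refine continuous_const.mul ?_
      refine continuous_finset_sum _ fun i _ => continuous_finset_sum _ fun j _ => ?_
      exact ((EuclideanSpace.proj (𝕜 := ℝ) i).continuous.mul continuous_const).mul
        (EuclideanSpace.proj (𝕜 := ℝ) j).continuous
  have hRIunif : ∀ d : ℕ, 2 ≤ d → ∀ x, HasFDerivAt g (Hop x) x →
      Integrable (fun z => |R x z|^2) (μ d) ∧
      ∫ z, |R x z|^2 ∂(μ d) ≤ 4*L₀^2 * A 2 * (c d)^2 := by
    intro d hd x hx
    haveI := hprob d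
    obtain ⟨hi4, he4⟩ := hnm d hd 2 (by norm_num)
    have hRmeas : AEStronglyMeasurable (fun z => |R x z|^2) (μ d) :=
      ((hRcont x).abs.pow 2).aestronglyMeasurable
    have hb : ∀ z, |R x z|^2 ≤ 4*L₀^2 * ‖z‖^(2*2) := by
      intro z
      have h := est1 x hx z
      have : |R x z|^2 ≤ (2*L₀*‖z‖^2)^2 := by nlinarith [abs_nonneg (R x z)]
      calc |R x z|^2 ≤ (2*L₀*‖z‖^2)^2 := this
        _ = 4*L₀^2*‖z‖^(2*2) := by ring
    have hint : Integrable (fun z => |R x z|^2) (μ d) := by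
      refine (hi4.const_mul (4*L₀^2)).mono' hRmeas (Filter.Eventually.of_forall fun z => ?_)
      rw [Real.norm_eq_abs, abs_of_nonneg (by positivity)]
      exact hb z
    refine ⟨hint, ?_⟩
    calc ∫ z, |R x z|^2 ∂(μ d) ≤ ∫ z, 4*L₀^2 * ‖z‖^(2*2) ∂(μ d) :=
          integral_mono hint (hi4.const_mul _) hb
      _ = 4*L₀^2 * ∫ z, ‖z‖^(2*2) ∂(μ d) := integral_const_mul _ _
      _ ≤ 4*L₀^2 * (A 2 * (c d)^2) := mul_le_mul_of_nonneg_left he4 (by positivity)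
      _ = 4*L₀^2 * A 2 * (c d)^2 := by ring
  have hRIbound : ∀ d : ℕ, 2 ≤ d → ∀ x, HasFDerivAt g (Hop x) x →
      ∀ ε δ : ℝ, 0 < ε → 0 < δ → (∀ z, ‖z‖ < δ → |R x z| ≤ ε * ‖z‖^2) →
      ∫ z, |R x z|^2 ∂(μ d) ≤ ε^2 * A 2 * (c d)^2 + (4*L₀^2/δ^4) * A 4 * (c d)^4 := by
    intro d hd x hx ε δ hε hδ hloc
    haveI := hprob d
    obtain ⟨hi4, he4⟩ := hnm d hd 2 (by norm_num)
    obtain ⟨hi8, he8⟩ := hnm d hd 4 (by norm_num)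
    have hbnd : ∀ z, |R x z|^2 ≤ ε^2*‖z‖^(2*2) + (4*L₀^2/δ^4) * ‖z‖^(2*4) := by
      intro z
      rcases lt_or_ge ‖z‖ δ with h | h
      · have h1 := hloc z h
        have h2 : |R x z|^2 ≤ (ε*‖z‖^2)^2 := by nlinarith [abs_nonneg (R x z)]
        have h3 : (0:ℝ) ≤ (4*L₀^2/δ^4) * ‖z‖^(2*4) := by positivity
        nlinarith
      · have h1 := est1 x hx z
        have h2 : |R x z|^2 ≤ (2*L₀*‖z‖^2)^2 := by nlinarith [abs_nonneg (R x z)]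
        have h4 : (0:ℝ) ≤ ε^2*‖z‖^(2*2) := by positivity
        have key : (2*L₀*‖z‖^2)^2 ≤ (4*L₀^2/δ^4) * ‖z‖^(2*4) := by
          rw [div_mul_eq_mul_div, le_div_iff₀ (by positivity : (0:ℝ) < δ^4)]
          have h3 : δ^4 ≤ ‖z‖^4 := pow_le_pow_left₀ hδ.le h 4
          calc (2*L₀*‖z‖^2)^2 * δ^4 = (4*L₀^2*‖z‖^4)*δ^4 := by ring
            _ ≤ (4*L₀^2*‖z‖^4)*‖z‖^4 := by
                refine mul_le_mul_of_nonneg_left h3 (by positivity)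
            _ = 4*L₀^2*‖z‖^(2*4) := by ring
        exact h2.trans (key.trans (le_add_of_nonneg_left h4))
    have hBint : Integrable
        (fun z : EuclideanSpace ℝ (Fin k) =>
          ε^2*‖z‖^(2*2) + (4*L₀^2/δ^4) * ‖z‖^(2*4)) (μ d) :=
      (hi4.const_mul _).add (hi8.const_mul _)
    have hRmeas : AEStronglyMeasurable (fun z => |R x z|^2) (μ d) :=
      ((hRcont x).abs.pow 2).aestronglyMeasurable
    have hint : Integrable (fun z => |R x z|^2) (μ d) := by
      refine hBint.mono' hRmeas (Filter.Eventually.of_forall fun z => ?_)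
      rw [Real.norm_eq_abs, abs_of_nonneg (by positivity)]
      exact hbnd z
    calc ∫ z, |R x z|^2 ∂(μ d)
        ≤ ∫ z, (ε^2*‖z‖^(2*2) + (4*L₀^2/δ^4) * ‖z‖^(2*4)) ∂(μ d) :=
          integral_mono hint hBint hbnd
      _ = ε^2 * ∫ z, ‖z‖^(2*2) ∂(μ d) + (4*L₀^2/δ^4) * ∫ z, ‖z‖^(2*4) ∂(μ d) := by
          rw [integral_add (hi4.const_mul _) (hi8.const_mul _), integral_const_mul,
            integral_const_mul]
      _ ≤ ε^2 * (A 2 * (c d)^2) + (4*L₀^2/δ^4) * (A 4 * (c d)^4) :=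
          add_le_add (mul_le_mul_of_nonneg_left he4 (by positivity))
            (mul_le_mul_of_nonneg_left he8 (by positivity))
      _ = ε^2 * A 2 * (c d)^2 + (4*L₀^2/δ^4) * A 4 * (c d)^4 := by ring
  have hmeasF : ∀ d : ℕ, AEStronglyMeasurable
      (fun x => l^2 * ((d:ℝ)-1) * Real.sqrt (∫ z, |R x z|^2 ∂(μ d))) ν := by
    intro d
    haveI := hprob d
    have hj : StronglyMeasurable fun p : EuclideanSpace ℝ (Fin k) × EuclideanSpace ℝ (Fin k)
        => |R p.1 p.2|^2 := by
      apply Measurable.stronglyMeasurable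
      simp only [hRdef]
      have h1 : Measurable fun p : EuclideanSpace ℝ (Fin k) × EuclideanSpace ℝ (Fin k)
          => Real.log (π (p.1 + p.2)) :=
        Real.measurable_log.comp (hπmeas.comp (measurable_fst.add measurable_snd))
      have h2 : Measurable fun p : EuclideanSpace ℝ (Fin k) × EuclideanSpace ℝ (Fin k)
          => Real.log (π p.1) :=
        (Real.measurable_log.comp hπmeas).comp measurable_fst
      have h3 : Measurable fun p : EuclideanSpace ℝ (Fin k) × EuclideanSpace ℝ (Fin k)
          => (⟪g p.1, p.2⟫ : ℝ) :=
        ((hgcont.comp continuous_fst).inner continuous_snd).measurable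
      have h4 : Measurable fun p : EuclideanSpace ℝ (Fin k) × EuclideanSpace ℝ (Fin k)
          => ∑ i, ∑ j, p.2 i * H p.1 i j * p.2 j := by
        refine Finset.measurable_sum _ fun i _ => Finset.measurable_sum _ fun j _ => ?_
        exact (((EuclideanSpace.proj (𝕜 := ℝ) i).continuous.measurable.comp
          measurable_snd).mul ((hHmeas i j).comp measurable_fst)).mul
          ((EuclideanSpace.proj (𝕜 := ℝ) j).continuous.measurable.comp measurable_snd)
      exact ((((h1.sub h2).sub h3).sub (measurable_const.mul h4)).abs).pow_const 2
    have hsm : StronglyMeasurable fun x => ∫ z, |R x z|^2 ∂(μ d) :=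
      hj.integral_prod_right'
    exact ((Real.continuous_sqrt.comp_stronglyMeasurable hsm).const_mul
      (l^2 * ((d:ℝ)-1))).aestronglyMeasurable
  have hgood : ∀ᵐ x ∂ν, HasFDerivAt g (Hop x) x := hHae.filter_mono hνvol.ae_le
  have key : Tendsto
      (fun d : ℕ => ∫ x, l^2 * ((d:ℝ)-1) * Real.sqrt (∫ z, |R x z|^2 ∂(μ d)) ∂ν)
      atTop (nhds 0) := by
    have hFbound : ∀ d : ℕ, 2 ≤ d → ∀ x, HasFDerivAt g (Hop x) x →
        ∀ ε δ : ℝ, 0 < ε → 0 < δ → (∀ z, ‖z‖ < δ → |R x z| ≤ ε * ‖z‖^2) →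
        Real.sqrt (∫ z, |R x z|^2 ∂(μ d))
          ≤ ε * Real.sqrt (A 2) * c d + (2*L₀*Real.sqrt (A 4)/δ^2) * (c d)^2 := by
      intro d hd x hx ε δ hε hδ hloc
      have hIR := hRIbound d hd x hx ε δ hε hδ hloc
      have hc := (hcpos d hd).le
      have hA2 := hAnn 2
      have hA4 := hAnn 4
      have h2 : Real.sqrt (ε^2 * A 2 * (c d)^2) = ε * Real.sqrt (A 2) * c d := by
        rw [show ε^2 * A 2 * (c d)^2 = (ε * Real.sqrt (A 2) * c d)^2 by
          linear_combination (-(ε^2*(c d)^2)) * Real.sq_sqrt hA2]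
        exact Real.sqrt_sq (mul_nonneg (mul_nonneg hε.le (Real.sqrt_nonneg _)) hc)
      have h3 : Real.sqrt ((4*L₀^2/δ^4) * A 4 * (c d)^4)
          = (2*L₀*Real.sqrt (A 4)/δ^2) * (c d)^2 := by
        rw [show (4*L₀^2/δ^4) * A 4 * (c d)^4 = ((2*L₀*Real.sqrt (A 4)/δ^2) * (c d)^2)^2 by
          linear_combination (-(4*L₀^2*(c d)^4/δ^4)) * Real.sq_sqrt hA4]
        refine Real.sqrt_sq ?_
        have h5 : 0 ≤ 2*L₀*Real.sqrt (A 4)/δ^2 := by positivity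
        positivity
      calc Real.sqrt (∫ z, |R x z|^2 ∂(μ d))
          ≤ Real.sqrt (ε^2 * A 2 * (c d)^2 + (4*L₀^2/δ^4) * A 4 * (c d)^4) :=
            Real.sqrt_le_sqrt hIR
        _ ≤ Real.sqrt (ε^2 * A 2 * (c d)^2) + Real.sqrt ((4*L₀^2/δ^4) * A 4 * (c d)^4) :=
            my_sqrt_add_le _ _
              (mul_nonneg (mul_nonneg (sq_nonneg _) hA2) (sq_nonneg _))
              (mul_nonneg (mul_nonneg (by positivity) hA4) (by positivity))
        _ = _ := by rw [h2, h3]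
    have hM : ∀ᶠ d : ℕ in atTop, ∀ᵐ x ∂ν,
        ‖l^2*((d:ℝ)-1) * Real.sqrt (∫ z, |R x z|^2 ∂(μ d))‖
          ≤ 2*L₀*Real.sqrt (A 2)*l^4 := by
      filter_upwards [eventually_ge_atTop 2] with d hd
      filter_upwards [hgood] with x hx
      have hF2 := (hRIunif d hd x hx).2
      have hc := (hcpos d hd).le
      have hne : ((d:ℝ)-1) ≠ 0 := by linarith [hd1 d hd]
      have hdpos : (0:ℝ) ≤ (d:ℝ)-1 := by linarith [hd1 d hd]
      have hs : Real.sqrt (∫ z, |R x z|^2 ∂(μ d)) ≤ 2*L₀*Real.sqrt (A 2) * c d := by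
        have h1 : Real.sqrt (4*L₀^2 * A 2 * (c d)^2) = 2*L₀*Real.sqrt (A 2)*c d := by
          rw [show 4*L₀^2 * A 2 * (c d)^2 = (2*L₀*Real.sqrt (A 2)*c d)^2 by
            linear_combination (-(4*L₀^2*(c d)^2)) * Real.sq_sqrt (hAnn 2)]
          exact Real.sqrt_sq (by
            have h6 : 0 ≤ 2*L₀*Real.sqrt (A 2) := by positivity
            exact mul_nonneg h6 hc)
        calc Real.sqrt (∫ z, |R x z|^2 ∂(μ d))
            ≤ Real.sqrt (4*L₀^2 * A 2 * (c d)^2) := Real.sqrt_le_sqrt hF2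
          _ = _ := h1
      rw [Real.norm_eq_abs, abs_of_nonneg (by positivity)]
      calc l^2*((d:ℝ)-1) * Real.sqrt (∫ z, |R x z|^2 ∂(μ d))
          ≤ l^2*((d:ℝ)-1) * (2*L₀*Real.sqrt (A 2) * c d) := by
            refine mul_le_mul_of_nonneg_left hs (by positivity)
        _ = 2*L₀*Real.sqrt (A 2)*l^4 := by
            rw [hcdef]
            field_simp
    have hlimae : ∀ᵐ x ∂ν, Tendsto
        (fun d : ℕ => l^2*((d:ℝ)-1) * Real.sqrt (∫ z, |R x z|^2 ∂(μ d)))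
        atTop (nhds 0) := by
      filter_upwards [hgood] with x hx
      rw [Metric.tendsto_nhds]
      intro ε' hε'
      have hden : (0:ℝ) < Real.sqrt (A 2)*l^4+1 := by positivity
      set εs : ℝ := ε' / (2*(Real.sqrt (A 2)*l^4+1)) with hεs
      have hεspos : 0 < εs := by rw [hεs]; positivity
      obtain ⟨δ, hδ, hloc⟩ := est2 x hx εs hεspos
      set T : ℝ := 2*L₀*Real.sqrt (A 4)*l^6/δ^2 with hT
      have h2 : Tendsto (fun d : ℕ => T / ((d:ℝ)-1)) atTop (nhds 0) := by
        refine Tendsto.div_atTop tendsto_const_nhds ?_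
        have := tendsto_atTop_add_const_right atTop (-1 : ℝ)
          (tendsto_natCast_atTop_atTop (R := ℝ))
        simpa [sub_eq_add_neg] using this
      filter_upwards [eventually_ge_atTop 2,
        h2.eventually (gt_mem_nhds (by positivity : (0:ℝ) < ε'/2))] with d hd hd2
      rw [Real.dist_eq, sub_zero]
      have hc := (hcpos d hd).le
      have hne : ((d:ℝ)-1) ≠ 0 := by linarith [hd1 d hd]
      have hdpos : (0:ℝ) ≤ (d:ℝ)-1 := by linarith [hd1 d hd]
      have hFb := hFbound d hd x hx εs δ hεspos hδ hloc
      rw [abs_of_nonneg (by positivity)]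
      have hmain : l^2*((d:ℝ)-1) * Real.sqrt (∫ z, |R x z|^2 ∂(μ d))
          ≤ εs*Real.sqrt (A 2)*l^4 + T/((d:ℝ)-1) := by
        calc l^2*((d:ℝ)-1) * Real.sqrt (∫ z, |R x z|^2 ∂(μ d))
            ≤ l^2*((d:ℝ)-1) * (εs * Real.sqrt (A 2) * c d
                + (2*L₀*Real.sqrt (A 4)/δ^2) * (c d)^2) := by
              refine mul_le_mul_of_nonneg_left hFb (by positivity)
          _ = εs*Real.sqrt (A 2)*l^4 + T/((d:ℝ)-1) := by
              rw [hcdef, hT]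
              field_simp
      have hfirst : εs*Real.sqrt (A 2)*l^4 ≤ ε'/2 := by
        have heq : εs*(Real.sqrt (A 2)*l^4+1) = ε'/2 := by
          rw [hεs]
          field_simp
        nlinarith [hεspos, Real.sqrt_nonneg (A 2), sq_nonneg l]
      linarith [hmain, hfirst, hd2]
    have hdct := tendsto_integral_filter_of_dominated_convergence
      (μ := ν)
      (F := fun (d : ℕ) x => l^2*((d:ℝ)-1) * Real.sqrt (∫ z, |R x z|^2 ∂(μ d)))
      (f := fun _ => (0:ℝ)) (bound := fun _ => 2*L₀*Real.sqrt (A 2)*l^4)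
      (Filter.Eventually.of_forall hmeasF) hM (integrable_const _)
      (by simpa using hlimae)
    simpa using hdct
  have final := key.const_mul (Real.sqrt (2 * ∑ i, ∑ j, Λ i j ^ 2 + (∑ i, Λ i i) ^ 2))
  rw [mul_zero] at final
  refine final.congr fun d => ?_
  simp only [hRdef]
  rw [integral_const_mul]
  ring
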